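/- Baum-Welch sufficient statistic identity: the sum over all state sequences σ ∈ S^{n+1} of I(σ_i = s, σ_{i+1} = s')·I(x_i = a)·p_{X,S|Θ}(x, σ | θ) equals f_{x,s}(i-1)·θ_{s';a,s}·b_{x,s'}(i) when x_i = a (and 0 otherwise). -/
import Mathlib


open Finset

private def Bfuel {S : Type*} [Fintype S] (w : ℕ → S → S → ℝ) : ℕ → ℕ → S → ℝ
  | _, 0, _ => 1
  | k, m+1, r => ∑ u : S, w k r u * Bfuel w (k+1) m u

private lemma key {S : Type*} [Fintype S] (w : ℕ → S → S → ℝ) :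
    ∀ (m k : ℕ) (φ : S → ℝ),
      ∑ σ : Fin (m+1) → S, φ (σ 0) * ∏ j : Fin m, w (k + ↑j) (σ j.castSucc) (σ j.succ)
        = ∑ r : S, φ r * Bfuel w k m r := by
  intro m
  induction m with
  | zero =>
    intro k φ
    rw [Fintype.sum_equiv (Equiv.funUnique (Fin 1) S) _ (fun r => φ r * Bfuel w k 0 r)]
    intro σ
    simp [Bfuel]
  | succ m ih =>
    intro k φ
    rw [← (Fin.consEquiv (fun _ : Fin (m+2) => S)).sum_comp]
    rw [Fintype.sum_prod_type]
    have hterm : ∀ (u : S) (τ : Fin (m+1) → S),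
        φ ((Fin.consEquiv (fun _ : Fin (m+2) => S)) (u, τ) 0) *
          ∏ j : Fin (m+1), w (k + ↑j)
            ((Fin.consEquiv (fun _ : Fin (m+2) => S)) (u, τ) j.castSucc)
            ((Fin.consEquiv (fun _ : Fin (m+2) => S)) (u, τ) j.succ)
        = (φ u * w k u (τ 0)) *
            ∏ j : Fin m, w ((k+1) + ↑j) (τ j.castSucc) (τ j.succ) := by
      intro u τ
      have hcons : (Fin.consEquiv (fun _ : Fin (m+2) => S)) (u, τ) = Fin.cons u τ := rfl
      rw [hcons]
      rw [Fin.prod_univ_succ]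
      have h0 : (Fin.cons u τ : Fin (m+2) → S) ((0 : Fin (m+1)).castSucc) = u := by
        simp
      have h1 : (Fin.cons u τ : Fin (m+2) → S) ((0 : Fin (m+1)).succ) = τ 0 := by
        rw [Fin.cons_succ]
      have h2 : ∀ j : Fin m,
          (Fin.cons u τ : Fin (m+2) → S) ((j.succ : Fin (m+1)).castSucc) = τ j.castSucc := by
        intro j
        rw [← Fin.succ_castSucc, Fin.cons_succ]
      have h3 : ∀ j : Fin m,
          (Fin.cons u τ : Fin (m+2) → S) ((j.succ : Fin (m+1)).succ) = τ j.succ := by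
        intro j
        rw [Fin.cons_succ]
      rw [h0, h1]
      have h4 : ∀ j : Fin m, k + ↑(j.succ) = (k+1) + (j : ℕ) := by
        intro j; simp [Fin.val_succ]; omega
      have : (Fin.cons u τ : Fin (m+2) → S) 0 = u := Fin.cons_zero _ _
      rw [this]
      rw [Finset.prod_congr rfl (fun j _ => by rw [h2 j, h3 j, h4 j])]
      simp [mul_assoc]
    rw [Finset.sum_congr rfl (fun u _ => Finset.sum_congr rfl (fun τ _ => hterm u τ))]
    have hih : ∀ u : S,
        ∑ τ : Fin (m+1) → S, (φ u * w k u (τ 0)) *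
            ∏ j : Fin m, w ((k+1) + ↑j) (τ j.castSucc) (τ j.succ)
        = ∑ r : S, (φ u * w k u r) * Bfuel w (k+1) m r := by
      intro u
      exact ih (k+1) (fun v => φ u * w k u v)
    rw [Finset.sum_congr rfl (fun u _ => hih u)]
    show _ = ∑ r : S, φ r * ∑ u : S, w k r u * Bfuel w (k+1) m u
    refine Finset.sum_congr rfl fun u _ => ?_
    rw [Finset.mul_sum]
    refine Finset.sum_congr rfl fun r _ => ?_
    ring

/-- Baum-Welch sufficient statistic identity:
`Σ_{σ∈S^{n+1}} I(σ_i = s, σ_{i+1} = s')·I(x_i = a)·p_{X,S|Θ}(x,σ|θ)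
  = f_{x,s}(i-1)·θ_{s';a,s}·b_{x,s'}(i)` when `x_i = a`, and `0` otherwise.
Positions are one-indexed in the paper; here `i : Fin n` is the zero-indexed
position, so `f_{x,s}(i-1)` is `fa ↑i s` and `b_{x,s'}(i)` is `bb (↑i+1) s'`.
`θ a s s'` denotes `θ_{s';a,s}`. -/
theorem stmt_16 {A S : Type*} [Fintype A] [Fintype S]
    [DecidableEq A] [DecidableEq S]
    {n : ℕ} (x : Fin n → A)
    (θ : A → S → S → ℝ)
    (fa : ℕ → S → ℝ)
    (hf0 : ∀ r : S, fa 0 r = 1 / ((Fintype.card S : ℝ) * (Fintype.card A : ℝ) ^ n))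
    (hfi : ∀ (i : ℕ) (hi : i < n) (r : S),
      fa (i + 1) r = ∑ s : S, fa i s * θ (x ⟨i, hi⟩) s r)
    (bb : ℕ → S → ℝ)
    (hbn : ∀ r : S, bb n r = 1)
    (hbi : ∀ (i : ℕ) (hi : i < n) (r : S),
      bb i r = ∑ s : S, θ (x ⟨i, hi⟩) r s * bb (i + 1) s)
    (i : Fin n) (s s' : S) (a : A) :
    ∑ σ : Fin (n + 1) → S,
        (if σ i.castSucc = s ∧ σ i.succ = s' then (1 : ℝ) else 0) *
          (if x i = a then (1 : ℝ) else 0) *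
            ((1 / ((Fintype.card S : ℝ) * (Fintype.card A : ℝ) ^ n)) *
              ∏ j : Fin n, θ (x j) (σ j.castSucc) (σ j.succ))
      = if x i = a then fa i s * θ a s s' * bb (i + 1) s' else 0 := by
  classical
  by_cases hxa : x i = a
  case neg => simp [hxa]
  subst hxa
  have hrhs : (if x i = x i then fa (i:ℕ) s * θ (x i) s s' * bb ((i:ℕ) + 1) s' else 0)
      = fa (i:ℕ) s * θ (x i) s s' * bb ((i:ℕ) + 1) s' := if_pos rfl
  rw [hrhs]
  set C : ℝ := 1 / ((Fintype.card S : ℝ) * (Fintype.card A : ℝ) ^ n) with hC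
  set w : ℕ → S → S → ℝ := fun j u v =>
    (if j = (i : ℕ) then (if u = s ∧ v = s' then (1:ℝ) else 0) else 1) *
    (if h : j < n then θ (x ⟨j, h⟩) u v else 0) with hw
  -- rewrite each summand
  have hprod : ∀ σ : Fin (n+1) → S,
      (if σ i.castSucc = s ∧ σ i.succ = s' then (1:ℝ) else 0) *
          (if x i = x i then (1:ℝ) else 0) *
          (C * ∏ j : Fin n, θ (x j) (σ j.castSucc) (σ j.succ))
      = (fun _ : S => C) (σ 0) * ∏ j : Fin n, w (0 + ↑j) (σ j.castSucc) (σ j.succ) := by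
    intro σ
    rw [if_pos rfl, mul_one]
    have hmain : (if σ i.castSucc = s ∧ σ i.succ = s' then (1:ℝ) else 0) *
        ∏ j : Fin n, θ (x j) (σ j.castSucc) (σ j.succ)
        = ∏ j : Fin n, w (0 + ↑j) (σ j.castSucc) (σ j.succ) := by
      by_cases hc : σ i.castSucc = s ∧ σ i.succ = s'
      · rw [if_pos hc, one_mul]
        refine Finset.prod_congr rfl fun j _ => ?_
        simp only [hw, Nat.zero_add, dif_pos j.isLt, Fin.eta]
        by_cases hj : (j:ℕ) = (i:ℕ)
        · have hj' : j = i := Fin.ext hj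
          subst hj'
          rw [if_pos rfl, if_pos hc, one_mul]
        · rw [if_neg hj, one_mul]
      · rw [if_neg hc, zero_mul]
        symm
        refine Finset.prod_eq_zero (Finset.mem_univ i) ?_
        simp [hw, hc]
    calc (if σ i.castSucc = s ∧ σ i.succ = s' then (1:ℝ) else 0) *
        (C * ∏ j : Fin n, θ (x j) (σ j.castSucc) (σ j.succ))
        = C * ((if σ i.castSucc = s ∧ σ i.succ = s' then (1:ℝ) else 0) *
            ∏ j : Fin n, θ (x j) (σ j.castSucc) (σ j.succ)) := by ring
      _ = _ := by rw [hmain]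
  rw [Finset.sum_congr rfl (fun σ _ => hprod σ)]
  rw [key w n 0 (fun _ : S => C)]
  -- now LHS = ∑ r, C * Bfuel w 0 n r
  have hBbb : ∀ d k, k + d = n → (i:ℕ) < k → ∀ r, Bfuel w k d r = bb k r := by
    intro d
    induction d with
    | zero =>
      intro k hk _ r
      obtain rfl : k = n := by omega
      simp [Bfuel, hbn]
    | succ d ihd =>
      intro k hk hik r
      have hkn : k < n := by omega
      show (∑ u : S, w k r u * Bfuel w (k+1) d u) = bb k r
      rw [hbi k hkn r]
      refine Finset.sum_congr rfl fun u _ => ?_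
      rw [ihd (k+1) (by omega) (by omega) u]
      congr 1
      simp only [hw]
      rw [if_neg (by omega), one_mul, dif_pos hkn]
  have hstep : ∀ k, k < (i:ℕ) →
      ∑ r : S, fa k r * Bfuel w k (n - k) r
        = ∑ r : S, fa (k+1) r * Bfuel w (k+1) (n - (k+1)) r := by
    intro k hk
    have hkn : k < n := lt_trans hk i.isLt
    have hnk : n - k = (n - (k+1)) + 1 := by omega
    rw [hnk]
    have hwk : ∀ r u, w k r u = θ (x ⟨k, hkn⟩) r u := by
      intro r u; simp only [hw]; rw [if_neg (by omega), one_mul, dif_pos hkn]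
    calc ∑ r : S, fa k r * Bfuel w k (n - (k+1) + 1) r
        = ∑ r : S, ∑ u : S, fa k r * (θ (x ⟨k,hkn⟩) r u * Bfuel w (k+1) (n-(k+1)) u) := by
          refine Finset.sum_congr rfl fun r _ => ?_
          show fa k r * (∑ u : S, w k r u * Bfuel w (k+1) (n-(k+1)) u) = _
          rw [Finset.mul_sum]
          exact Finset.sum_congr rfl fun u _ => by rw [hwk]
      _ = ∑ u : S, (∑ r : S, fa k r * θ (x ⟨k,hkn⟩) r u) * Bfuel w (k+1) (n-(k+1)) u := by
          rw [Finset.sum_comm]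
          refine Finset.sum_congr rfl fun u _ => ?_
          rw [Finset.sum_mul]
          exact Finset.sum_congr rfl fun r _ => by ring
      _ = ∑ u : S, fa (k+1) u * Bfuel w (k+1) (n-(k+1)) u := by
          refine Finset.sum_congr rfl fun u _ => ?_
          rw [hfi k hkn u]
  have hup : ∀ d, d ≤ (i:ℕ) →
      ∑ r : S, fa ((i:ℕ) - d) r * Bfuel w ((i:ℕ)-d) (n - ((i:ℕ)-d)) r
        = ∑ r : S, fa (i:ℕ) r * Bfuel w (i:ℕ) (n - (i:ℕ)) r := by
    intro d
    induction d with
    | zero => intro _; simp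
    | succ d ihd =>
      intro hd
      have h1 : (i:ℕ) - (d+1) < (i:ℕ) := by omega
      rw [hstep _ h1]
      have h2 : (i:ℕ) - (d+1) + 1 = (i:ℕ) - d := by omega
      rw [h2]
      exact ihd (by omega)
  have hstart : ∑ r : S, C * Bfuel w 0 n r
      = ∑ r : S, fa ((i:ℕ) - (i:ℕ)) r * Bfuel w ((i:ℕ)-(i:ℕ)) (n - ((i:ℕ)-(i:ℕ))) r := by
    simp only [Nat.sub_self, Nat.sub_zero]
    exact Finset.sum_congr rfl fun r _ => by rw [hf0 r]
  rw [hstart, hup (i:ℕ) le_rfl]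
  -- final computation
  have h1 : n - (i:ℕ) = (n - ((i:ℕ)+1)) + 1 := by omega
  rw [h1]
  have hwi : ∀ r u, w (i:ℕ) r u = (if r = s ∧ u = s' then (1:ℝ) else 0) * θ (x i) r u := by
    intro r u
    simp [hw, i.isLt]
  have hBb : ∀ u : S, Bfuel w ((i:ℕ)+1) (n-((i:ℕ)+1)) u = bb ((i:ℕ)+1) u :=
    fun u => hBbb (n-((i:ℕ)+1)) ((i:ℕ)+1) (by omega) (by omega) u
  calc ∑ r : S, fa (i:ℕ) r * Bfuel w (i:ℕ) (n-((i:ℕ)+1)+1) r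
      = ∑ r : S, ∑ u : S, fa (i:ℕ) r *
          ((if r = s ∧ u = s' then (1:ℝ) else 0) * θ (x i) r u * bb ((i:ℕ)+1) u) := by
        refine Finset.sum_congr rfl fun r _ => ?_
        show fa (i:ℕ) r * (∑ u : S, w (i:ℕ) r u * Bfuel w ((i:ℕ)+1) (n-((i:ℕ)+1)) u) = _
        rw [Finset.mul_sum]
        refine Finset.sum_congr rfl fun u _ => ?_
        rw [hwi, hBb u]
    _ = fa (i:ℕ) s * θ (x i) s s' * bb ((i:ℕ)+1) s' := by
        rw [Finset.sum_eq_single s]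
        · rw [Finset.sum_eq_single s']
          · rw [if_pos ⟨rfl, rfl⟩]; ring
          · intro u _ hu
            rw [if_neg (fun h => hu h.2)]; ring
          · intro h; exact absurd (Finset.mem_univ s') h
        · intro r _ hr
          refine Finset.sum_eq_zero fun u _ => ?_
          rw [if_neg (fun h => hr h.1)]; ring
        · intro h; exact absurd (Finset.mem_univ s) h
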